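/- Let K be a field, let A₁, B₁ be n×n matrices over K, and let v, v̄, w, w' be row vectors and μ, m, m', n₁, n₁' ∈ K with m ≠ 0. Assume: v·(B₁·A₁) = μ·v; v·B₁ = m·v̄ + n₁·w with w·A₁ = 0; and v̄·A₁ = m'·v + n₁'·w'. If v and w' are linearly independent over K, then μ = m·m' and n₁' = 0 (the vanishing of the spurious null-space component in the paper's eigenvector-sharing lemma). -/

import Mathlib

open Matrix

/-- Vanishing of the spurious null-space component in the paper's eigenvector-sharing
lemma: if `v·(B₁·A₁) = μ·v`, `v·B₁ = m·v̄ + n₁·w` with `w·A₁ = 0`, and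
`v̄·A₁ = m'·v + n₁'·w'` with `m ≠ 0`, and `v, w'` are linearly independent,
then `μ = m·m'` and `n₁' = 0`. -/
theorem stmt_7 {K : Type*} [Field K] {n : Type*} [Fintype n] [DecidableEq n]
    (A₁ B₁ : Matrix n n K)
    (v vbar w w' : n → K) (mu m m' n₁ n₁' : K)
    (hm : m ≠ 0)
    (hv : v ᵥ* (B₁ * A₁) = mu • v)
    (hvB1 : v ᵥ* B₁ = m • vbar + n₁ • w)
    (hw : w ᵥ* A₁ = 0)
    (hvbar : vbar ᵥ* A₁ = m' • v + n₁' • w')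
    (hind : LinearIndependent K ![v, w']) :
    mu = m * m' ∧ n₁' = 0 := by
  have key : mu • v = (m * m') • v + (m * n₁') • w' := by
    rw [← hv, ← vecMul_vecMul, hvB1, add_vecMul, smul_vecMul, smul_vecMul, hw, hvbar,
      smul_add, smul_smul, smul_smul, smul_zero, add_zero]
  have h0 : (mu - m * m') • v + (-(m * n₁')) • w' = 0 := by
    rw [sub_smul, neg_smul, key]; abel
  obtain ⟨h1, h2⟩ := LinearIndependent.pair_iff.mp hind _ _ h0
  refine ⟨sub_eq_zero.mp h1, ?_⟩
  exact (mul_eq_zero.mp (neg_eq_zero.mp h2)).resolve_left hm
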